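/- For the 3D potential V(x,y,z) = (x²+y²+z²)/2 + x³ + y³ + z³ + xyz, the set of (α, β) ∈ ℝ² such that ∇V(x, αx, βx) is parallel to (1, α, β) for all x ∈ ℝ equals {(0,0), (1/2, 1), (1, 1/2), (1, 1), (2, 2)}. -/

import Mathlib

private lemma dX (a b x : ℝ) :
    deriv (fun t : ℝ => (t ^ 2 + a ^ 2 + b ^ 2) / 2 + t ^ 3 + a ^ 3 + b ^ 3 + t * a * b) x
      = x + 3 * x ^ 2 + a * b := by
  have h2 : HasDerivAt (fun t : ℝ => t ^ 2) (2 * x) x := by simpa using hasDerivAt_pow 2 x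
  have h3 : HasDerivAt (fun t : ℝ => t ^ 3) (3 * x ^ 2) x := by simpa using hasDerivAt_pow 3 x
  have hl : HasDerivAt (fun t : ℝ => t * a * b) (1 * a * b) x :=
    ((hasDerivAt_id x).mul_const a).mul_const b
  have H := ((((((h2.add_const (a ^ 2)).add_const (b ^ 2)).div_const 2).add h3).add_const
      (a ^ 3)).add_const (b ^ 3)).add hl
  exact (H.congr_deriv (by ring)).deriv

private lemma dY (a b y : ℝ) :
    deriv (fun t : ℝ => (a ^ 2 + t ^ 2 + b ^ 2) / 2 + a ^ 3 + t ^ 3 + b ^ 3 + a * t * b) y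
      = y + 3 * y ^ 2 + a * b := by
  have h2 : HasDerivAt (fun t : ℝ => t ^ 2) (2 * y) y := by simpa using hasDerivAt_pow 2 y
  have h3 : HasDerivAt (fun t : ℝ => t ^ 3) (3 * y ^ 2) y := by simpa using hasDerivAt_pow 3 y
  have hl : HasDerivAt (fun t : ℝ => a * t * b) (a * 1 * b) y :=
    ((hasDerivAt_id y).const_mul a).mul_const b
  have H := (((((((h2.const_add (a ^ 2)).add_const (b ^ 2)).div_const 2).const_add
      (a ^ 3)).add h3).add_const (b ^ 3)).add hl)
  have H' : HasDerivAt
      (fun t : ℝ => (a ^ 2 + t ^ 2 + b ^ 2) / 2 + a ^ 3 + t ^ 3 + b ^ 3 + a * t * b)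
      ((2 * y + 0) / 2 + (0 + 3 * y ^ 2) + 0 + a * 1 * b) y := by
    exact (H.congr_deriv (by ring)).congr_of_eventuallyEq
      (Filter.Eventually.of_forall fun t => by simp only [Pi.add_apply]; ring)
  rw [H'.deriv]; ring

private lemma dZ (a b z : ℝ) :
    deriv (fun t : ℝ => (a ^ 2 + b ^ 2 + t ^ 2) / 2 + a ^ 3 + b ^ 3 + t ^ 3 + a * b * t) z
      = z + 3 * z ^ 2 + a * b := by
  have h2 : HasDerivAt (fun t : ℝ => t ^ 2) (2 * z) z := by simpa using hasDerivAt_pow 2 z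
  have h3 : HasDerivAt (fun t : ℝ => t ^ 3) (3 * z ^ 2) z := by simpa using hasDerivAt_pow 3 z
  have hl : HasDerivAt (fun t : ℝ => a * b * t) (a * b * 1) z :=
    (hasDerivAt_id z).const_mul (a * b)
  have H := (((((h2.const_add (a ^ 2 + b ^ 2)).div_const 2).add_const
      (a ^ 3)).add_const (b ^ 3)).add h3).add hl
  have H' : HasDerivAt
      (fun t : ℝ => (a ^ 2 + b ^ 2 + t ^ 2) / 2 + a ^ 3 + b ^ 3 + t ^ 3 + a * b * t)
      ((0 + 2 * z) / 2 + 3 * z ^ 2 + a * b * 1) z := by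
    exact H.congr_deriv (by ring)
  rw [H'.deriv]; ring

theorem cubic3d_slope_spectrum (α β : ℝ) :
    let V : ℝ → ℝ → ℝ → ℝ := fun x y z =>
      (x ^ 2 + y ^ 2 + z ^ 2) / 2 + x ^ 3 + y ^ 3 + z ^ 3 + x * y * z
    (∃ lam : ℝ → ℝ, ∀ x : ℝ,
        deriv (fun t => V t (α * x) (β * x)) x = lam x ∧
        deriv (fun t => V x t (β * x)) (α * x) = lam x * α ∧
        deriv (fun t => V x (α * x) t) (β * x) = lam x * β) ↔
      ((α = 0 ∧ β = 0) ∨ (α = 1 / 2 ∧ β = 1) ∨ (α = 1 ∧ β = 1 / 2) ∨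
        (α = 1 ∧ β = 1) ∨ (α = 2 ∧ β = 2)) := by
  intro V
  simp only [V, dX, dY, dZ]
  constructor
  · rintro ⟨lam, h⟩
    obtain ⟨h1, h2, h3⟩ := h 1
    -- turn into polynomial equations
    have e1 : 3 * α ^ 2 + β - 3 * α - α ^ 2 * β = 0 := by
      rw [← h1] at h2; nlinarith [h2]
    have e2 : 3 * β ^ 2 + α - 3 * β - α * β ^ 2 = 0 := by
      rw [← h1] at h3; nlinarith [h3]
    have key : (α - β) * (3 * α + 3 * β - 4 - α * β) = 0 := by linear_combination e1 - e2
    rcases mul_eq_zero.mp key with hab | hc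
    · have hba : α = β := by linarith
      rw [← hba] at e1
      have hcub : α * (α - 1) * (α - 2) = 0 := by linear_combination -e1
      rcases mul_eq_zero.mp hcub with h' | h'
      · rcases mul_eq_zero.mp h' with h'' | h''
        · exact Or.inl ⟨h'', by linarith⟩
        · have h1' : α = 1 := by linarith
          exact Or.inr (Or.inr (Or.inr (Or.inl ⟨h1', by linarith⟩)))
      · have h2' : α = 2 := by linarith
        exact Or.inr (Or.inr (Or.inr (Or.inr ⟨h2', by linarith⟩)))
    · have hs : α + β - 3 * (α * β) = 0 := by linear_combination e1 - α * hc
      have hp : α * β = 1 / 2 := by linarith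
      have hsum : α + β = 3 / 2 := by linarith
      have hq : (α - 1) * (2 * α - 1) = 0 := by nlinarith [hp, hsum]
      rcases mul_eq_zero.mp hq with h' | h'
      · have ha : α = 1 := by linarith
        have hb : β = 1 / 2 := by linarith
        exact Or.inr (Or.inr (Or.inl ⟨ha, hb⟩))
      · have ha : α = 1 / 2 := by linarith
        have hb : β = 1 := by linarith
        exact Or.inr (Or.inl ⟨ha, hb⟩)
  · rintro (⟨ha, hb⟩ | ⟨ha, hb⟩ | ⟨ha, hb⟩ | ⟨ha, hb⟩ | ⟨ha, hb⟩) <;> subst ha <;> subst hb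
    · exact ⟨fun x => x + 3 * x ^ 2, fun x => ⟨by ring, by ring, by ring⟩⟩
    · exact ⟨fun x => x + 3 * x ^ 2 + (1 / 2) * x ^ 2, fun x => ⟨by ring, by ring, by ring⟩⟩
    · exact ⟨fun x => x + 3 * x ^ 2 + (1 / 2) * x ^ 2, fun x => ⟨by ring, by ring, by ring⟩⟩
    · exact ⟨fun x => x + 3 * x ^ 2 + x ^ 2, fun x => ⟨by ring, by ring, by ring⟩⟩
    · exact ⟨fun x => x + 3 * x ^ 2 + 4 * x ^ 2, fun x => ⟨by ring, by ring, by ring⟩⟩
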